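/- Let (T, η, μ) be a 2-monad on Cat whose unit η is cartesian (componentwise on underlying categories, with naturality squares pullbacks of categories) and such that T preserves the arrow-category cotensor (T(C^→) ≅ (TC)^→ compatibly). Then each component η_C : C → T C is a fully faithful functor. -/

import Mathlib

open CategoryTheory

universe u

/-! ### Auxiliary material: a hand-rolled walking arrow category -/

/-- Objects of the walking arrow category. -/
inductive WObj : Type u
  | zero | one

/-- Homs of the walking arrow category. -/
abbrev WHom : WObj.{u} → WObj.{u} → Type u
  | .one, .zero => PEmpty
  | _, _ => PUnit

instance (x y : WObj.{u}) : Subsingleton (WHom x y) := by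
  cases x <;> cases y <;> exact ⟨fun a b => Subsingleton.elim a b⟩

instance : Category.{u} WObj.{u} where
  Hom := WHom
  id x := match x with
    | .zero => PUnit.unit
    | .one => PUnit.unit
  comp {x y z} f g := match x, y, z, f, g with
    | .zero, _, .zero, _, _ => PUnit.unit
    | .zero, _, .one, _, _ => PUnit.unit
    | .one, .one, .one, _, _ => PUnit.unit
    | .one, .zero, _, f, _ => f.elim
    | .one, .one, .zero, _, g => g.elim
  id_comp f := Subsingleton.elim (α := WHom _ _) _ _
  comp_id f := Subsingleton.elim (α := WHom _ _) _ _
  assoc f g h := Subsingleton.elim (α := WHom _ _) _ _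

instance (x y : WObj.{u}) : Subsingleton (x ⟶ y) :=
  inferInstanceAs (Subsingleton (WHom x y))

/-- The walking arrow as an object of `Cat`. -/
def Wcat : Cat.{u, u} := Cat.of WObj.{u}

/-- The unique non-identity morphism of the walking arrow. -/
def wHom : (WObj.zero : Wcat.{u}) ⟶ WObj.one := PUnit.unit

/-- The functor out of the walking arrow classifying a morphism. -/
def cls {X : Cat.{u, u}} {x y : X} (g : x ⟶ y) : Wcat.{u} ⟶ X := Cat.Hom.ofFunctor {
  obj i := match i with
    | .zero => x
    | .one => y
  map {i j} f := match i, j, f with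
    | .zero, .zero, _ => 𝟙 x
    | .zero, .one, _ => g
    | .one, .one, _ => 𝟙 y
    | .one, .zero, f => f.elim
  map_id i := by cases i <;> rfl
  map_comp {i j k} f g := by
    cases i <;> cases j <;> cases k <;> first
      | exact f.elim | exact g.elim | simp }

@[simp] lemma cls_obj_zero {X : Cat.{u, u}} {x y : X} (g : x ⟶ y) :
    (cls g).toFunctor.obj WObj.zero = x := rfl

@[simp] lemma cls_obj_one {X : Cat.{u, u}} {x y : X} (g : x ⟶ y) :
    (cls g).toFunctor.obj WObj.one = y := rfl

@[simp] lemma cls_map_wHom {X : Cat.{u, u}} {x y : X} (g : x ⟶ y) :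
    (cls g).toFunctor.map wHom = g := rfl

/-- Extensionality for functors out of the walking arrow. -/
lemma W_ext {X : Type u} [Category.{u} X] (F G : WObj.{u} ⥤ X)
    (h0 : F.obj WObj.zero = G.obj WObj.zero)
    (h1 : F.obj WObj.one = G.obj WObj.one)
    (hw : F.map wHom = eqToHom h0 ≫ G.map wHom ≫ eqToHom h1.symm) : F = G := by
  apply CategoryTheory.Functor.ext
  · intro i j f
    cases i <;> cases j
    · have : f = 𝟙 _ := Subsingleton.elim _ _
      subst this; simp [h0]
    · have : f = wHom := Subsingleton.elim _ _
      subst this; exact hw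
    · exact f.elim
    · have : f = 𝟙 _ := Subsingleton.elim _ _
      subst this; simp [h1]
  · intro i; cases i
    · exact h0
    · exact h1

/-- Composing a classifying functor with a functor classifies the image. -/
lemma cls_comp {X Y : Cat.{u, u}} {x y : X} (g : x ⟶ y) (H : X ⟶ Y) :
    cls g ≫ H = cls (H.toFunctor.map g) := by
  refine Cat.Hom.ext (W_ext _ _ rfl rfl ?_)
  exact ((Category.id_comp _).trans (Category.comp_id _)).symm

/-! ### Auxiliary material: the point category -/

/-- The point category, as an object of `Cat`. -/
def ptCat : Cat.{u, u} := Cat.of (Discrete PUnit.{u + 1})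

instance : Subsingleton (Discrete PUnit.{u + 1}) :=
  ⟨fun a b => by cases a; cases b; congr⟩

instance (a b : Discrete PUnit.{u + 1}) : Subsingleton (a ⟶ b) :=
  inferInstanceAs (Subsingleton (ULift (PLift _)))

/-- Functors into the point are unique. -/
lemma to_pt_ext {Z : Cat.{u, u}} (F G : Z ⥤ Discrete PUnit.{u + 1}) : F = G := by
  apply CategoryTheory.Functor.ext
  · intro i j f
    apply Subsingleton.elim (α := _ ⟶ _)
  · intro i
    apply Subsingleton.elim

/-- The functor from the point picking out an object. -/
def pick {X : Cat.{u, u}} (x : X) : ptCat.{u} ⟶ X := Cat.Hom.ofFunctor ((Functor.const _).obj x)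

/-- The canonical functor to the point. -/
def toPt (X : Cat.{u, u}) : X ⟶ ptCat.{u} := Cat.Hom.ofFunctor ((Functor.const _).obj ⟨PUnit.unit⟩)

/-- Extensionality for functors out of the point. -/
lemma pt_obj_ext {X : Cat.{u, u}} (F G : Discrete PUnit.{u + 1} ⥤ X)
    (h : F.obj ⟨PUnit.unit⟩ = G.obj ⟨PUnit.unit⟩) : F = G := by
  apply CategoryTheory.Functor.ext
  · rintro ⟨⟨⟩⟩ ⟨⟨⟩⟩ f
    have : f = 𝟙 _ := Subsingleton.elim (α := _ ⟶ _) _ _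
    subst this; simp [h]
  · rintro ⟨⟨⟩⟩
    exact h

/-- Let `(T, η, μ)` be a 2-monad on `Cat` whose unit is cartesian (the
naturality squares of `η` are pullbacks of categories) and such that `T`
preserves the cotensor with the arrow category, compatibly with the domain and
codomain functors.  Then each component `η_C : C ⥤ T C` is fully faithful. -/
theorem unit_fullyFaithful_of_cartesian_of_preservesArrowCotensor
    (T : Monad Cat.{u, u})
    (hcart : ∀ {C D : Cat.{u, u}} (f : C ⟶ D),
      IsPullback (T.η.app C) f (T.map f) (T.η.app D))
    (hhom : ∀ C : Cat.{u, u},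
      ∃ e : T.obj (Cat.of (Arrow C)) ≅ Cat.of (Arrow (T.obj C)),
        T.map ((Arrow.leftFunc : Arrow C ⥤ C).toCatHom : Cat.of (Arrow C) ⟶ C) =
          e.hom ≫ ((Arrow.leftFunc : Arrow (T.obj C) ⥤ T.obj C).toCatHom : Cat.of (Arrow (T.obj C)) ⟶ T.obj C) ∧
        T.map ((Arrow.rightFunc : Arrow C ⥤ C).toCatHom : Cat.of (Arrow C) ⟶ C) =
          e.hom ≫ ((Arrow.rightFunc : Arrow (T.obj C) ⥤ T.obj C).toCatHom : Cat.of (Arrow (T.obj C)) ⟶ T.obj C)) :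
    ∀ C : Cat.{u, u}, (T.η.app C).toFunctor.Full ∧ (T.η.app C).toFunctor.Faithful := by
  intro C
  -- `η_C` is injective on objects, via the pullback square over the point.
  have inj : ∀ x x' : C, (T.η.app C).toFunctor.obj x = (T.η.app C).toFunctor.obj x' → x = x' := by
    intro x x' h
    have h1 : pick x ≫ T.η.app C = pick x' ≫ T.η.app C := Cat.Hom.ext (pt_obj_ext _ _ h)
    have h2 : pick x ≫ toPt C = pick x' ≫ toPt C := Cat.Hom.ext (to_pt_ext _ _)
    have h3 : pick x = pick x' := (hcart (toPt C)).hom_ext h1 h2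
    exact Functor.congr_obj (congrArg Cat.Hom.toFunctor h3) ⟨PUnit.unit⟩
  constructor
  · -- Fullness, via the pullback square over `Arrow.leftFunc`.
    obtain ⟨e, hel, her⟩ := hhom C
    refine ⟨fun {x y} g => ?_⟩
    have hw : 𝟙 ((T.η.app C).toFunctor.obj x) ≫ (Arrow.mk g).hom
        = (Arrow.mk (𝟙 ((T.η.app C).toFunctor.obj x))).hom ≫ g := by simp
    set m : (Arrow.mk (𝟙 ((T.η.app C).toFunctor.obj x)) : Cat.of (Arrow (T.obj C))) ⟶ (Arrow.mk g : Cat.of (Arrow (T.obj C))) := Arrow.homMk _ _ hw with hm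
    set b : Wcat.{u} ⟶ T.obj (Cat.of (Arrow C)) :=
      (cls (X := Cat.of (Arrow (T.obj C))) m) ≫ e.inv with hb
    have hsq : b ≫ T.map ((Arrow.leftFunc : Arrow C ⥤ C).toCatHom : Cat.of (Arrow C) ⟶ C)
        = cls (𝟙 x) ≫ T.η.app C := by
      erw [hb, Category.assoc, hel, Iso.inv_hom_id_assoc, cls_comp, cls_comp]
      have : ((Arrow.leftFunc : Arrow (T.obj C) ⥤ T.obj C).toCatHom : Cat.of (Arrow (T.obj C)) ⟶ T.obj C).toFunctor.map m
          = (T.η.app C).toFunctor.map (𝟙 x) := by simp [hm]; rfl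
      rw [this]
      rfl
    set L := (hcart ((Arrow.leftFunc : Arrow C ⥤ C).toCatHom : Cat.of (Arrow C) ⟶ C)).lift b (cls (𝟙 x)) hsq with hLdef
    have hL : L ≫ T.η.app (Cat.of (Arrow C)) = b :=
      (hcart ((Arrow.leftFunc : Arrow C ⥤ C).toCatHom : Cat.of (Arrow C) ⟶ C)).lift_fst b (cls (𝟙 x)) hsq
    set r : Wcat.{u} ⟶ C := L ≫ ((Arrow.rightFunc : Arrow C ⥤ C).toCatHom : Cat.of (Arrow C) ⟶ C) with hrdef
    have hnat : ((Arrow.rightFunc : Arrow C ⥤ C).toCatHom : Cat.of (Arrow C) ⟶ C) ≫ T.η.app C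
        = T.η.app (Cat.of (Arrow C)) ≫ T.map ((Arrow.rightFunc : Arrow C ⥤ C).toCatHom : Cat.of (Arrow C) ⟶ C) := by
      exact T.η.naturality (show Cat.of (Arrow C) ⟶ C from (Arrow.rightFunc : Arrow C ⥤ C).toCatHom)
    have hr : r ≫ T.η.app C = cls g := by
      erw [hrdef, Category.assoc, hnat, ← Category.assoc, hL, hb, Category.assoc, her,
        Iso.inv_hom_id_assoc, cls_comp]
      have : ((Arrow.rightFunc : Arrow (T.obj C) ⥤ T.obj C).toCatHom : Cat.of (Arrow (T.obj C)) ⟶ T.obj C).toFunctor.map m = g := by simp [hm]; rfl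
      rw [this]
      rfl
    have h0 : r.toFunctor.obj WObj.zero = x := by
      apply inj
      exact Functor.congr_obj (congrArg Cat.Hom.toFunctor hr) WObj.zero
    have h1 : r.toFunctor.obj WObj.one = y := by
      apply inj
      exact Functor.congr_obj (congrArg Cat.Hom.toFunctor hr) WObj.one
    refine ⟨eqToHom h0.symm ≫ r.toFunctor.map wHom ≫ eqToHom h1, ?_⟩
    have hh := Functor.congr_hom (congrArg Cat.Hom.toFunctor hr) wHom
    simp only [Functor.map_comp, eqToHom_map]
    rw [show (T.η.app C).toFunctor.map (r.toFunctor.map wHom) = (r ≫ T.η.app C).toFunctor.map wHom from rfl, hh]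
    simp [eqToHom_trans]
    erw [eqToHom_trans_assoc, eqToHom_trans, eqToHom_refl, eqToHom_refl, Category.id_comp, Category.comp_id]
  · -- Faithfulness, via the pullback square over the point.
    refine ⟨fun {x y} a₁ a₂ h => ?_⟩
    have h1 : cls a₁ ≫ T.η.app C = cls a₂ ≫ T.η.app C := by
      rw [cls_comp, cls_comp, h]
    have h2 : cls a₁ ≫ toPt C = cls a₂ ≫ toPt C := Cat.Hom.ext (to_pt_ext _ _)
    have h3 : cls a₁ = cls a₂ := (hcart (toPt C)).hom_ext h1 h2
    have h4 := Functor.congr_hom (congrArg Cat.Hom.toFunctor h3) wHom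
    exact h4.trans (by erw [eqToHom_refl, eqToHom_refl, Category.id_comp, Category.comp_id]; rfl)
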